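/- Suppose σ, σ′ ∈ Ωᵢ and ρ, ρ′ ∈ Ωⱼ are homogeneous elements such that σ − σ′ = ℏσ₁ for some homogeneous σ₁ ∈ Ωᵢ and ρ − ρ′ = ℏρ₁ for some homogeneous ρ₁ ∈ Ωⱼ. If x, x′ ∈ Ω satisfy ℏx = σρ − (−1)^{ij}ρσ and ℏx′ = σ′ρ′ − (−1)^{ij}ρ′σ′, then x − x′ ∈ ℏΩ. (Hence the generalized Poisson bracket on the quotient Ω/ℏΩ, defined by {class(σ), class(ρ)} := class(x) where ℏx = [σ,ρ], is well defined, independent of the choice of lifts σ, ρ and of the element x.) -/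

import Mathlib

/-- Well-definedness of the generalized Poisson bracket on the quotient `Ω/ℏΩ` of an
ℕ-graded ring `Ω` by a central parameter `ℏ`: if `σ, σ'` and `ρ, ρ'` are homogeneous lifts
agreeing modulo `ℏ` (with homogeneous differences), and `ℏ x = [σ,ρ]`, `ℏ x' = [σ',ρ']`
(graded commutators), then `x - x' ∈ ℏΩ`. -/
theorem metabracket_well_defined {Ω : Type*} [Ring Ω]
    (A : ℕ → AddSubgroup Ω) [GradedRing A]
    (ℏ : Ω) (hℏ0 : ℏ ∈ A 0) (hcentral : ∀ a : Ω, ℏ * a = a * ℏ)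
    (hreg : ∀ σ : Ω, ℏ ^ 2 * σ = 0 → ∃ τ : Ω, σ = ℏ * τ)
    (hcomm : ∀ (i j : ℕ), ∀ σ ∈ A i, ∀ ρ ∈ A j,
      ∃ τ : Ω, σ * ρ - (-1 : Ω) ^ (i * j) * (ρ * σ) = ℏ * τ)
    (i j : ℕ)
    (σ σ' σ₁ : Ω) (hσ : σ ∈ A i) (hσ' : σ' ∈ A i) (hσ₁ : σ₁ ∈ A i)
    (ρ ρ' ρ₁ : Ω) (hρ : ρ ∈ A j) (hρ' : ρ' ∈ A j) (hρ₁ : ρ₁ ∈ A j)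
    (hσdiff : σ - σ' = ℏ * σ₁) (hρdiff : ρ - ρ' = ℏ * ρ₁)
    (x x' : Ω)
    (hx : ℏ * x = σ * ρ - (-1 : Ω) ^ (i * j) * (ρ * σ))
    (hx' : ℏ * x' = σ' * ρ' - (-1 : Ω) ^ (i * j) * (ρ' * σ')) :
    ∃ y : Ω, x - x' = ℏ * y := by
  obtain ⟨t₁, e1⟩ := hcomm i j σ₁ hσ₁ ρ' hρ'
  obtain ⟨t₂, e2⟩ := hcomm i j σ' hσ' ρ₁ hρ₁
  obtain ⟨t₃, e3⟩ := hcomm i j σ₁ hσ₁ ρ₁ hρ₁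
  have hσ2 : σ = σ' + ℏ * σ₁ := by rw [← hσdiff]; abel
  have hρ2 : ρ = ρ' + ℏ * ρ₁ := by rw [← hρdiff]; abel
  set ε : Ω := (-1 : Ω) ^ (i * j) with hε
  have εc : ∀ a : Ω, ε * a = a * ε := fun a =>
    ((Commute.neg_one_left a).pow_left _).eq
  set w : Ω := t₁ + t₂ + ℏ * t₃ with hw
  have key : ℏ * (x - x' - ℏ * w) = 0 := by
    rw [hσ2, hρ2] at hx
    linear_combination (norm := (noncomm_ring; all_goals (simp only [hw, neg_smul, one_smul]; noncomm_ring))) hx - hx'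
      - hcentral σ' * ρ₁ - ℏ * hcentral σ₁ * ρ₁
      + ε * hcentral ρ' * σ₁ + ε * ℏ * hcentral ρ₁ * σ₁
      - εc ℏ * (ρ' * σ₁) - εc ℏ * (ρ₁ * σ') - εc ℏ * (ℏ * (ρ₁ * σ₁))
      - ℏ * εc ℏ * (ρ₁ * σ₁)
      + ℏ * e1 + ℏ * e2 + ℏ * ℏ * e3
  have key2 : ℏ ^ 2 * (x - x' - ℏ * w) = 0 := by
    rw [pow_two, mul_assoc, key, mul_zero]
  obtain ⟨τ, hτ⟩ := hreg _ key2
  have hfin : x - x' = ℏ * w + ℏ * τ := by rw [← hτ]; abel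
  refine ⟨w + τ, ?_⟩
  rw [hfin, hw]
  noncomm_ring
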